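/- Let q ≥ 2, g ≥ 1 and h ≥ 1 be integers and let (b_n)_{n≥0} be a sequence of natural numbers with b_n = h(q^{n−g+1} − 1)/(q − 1) for every n > 2g − 2. For every (s, w) ∈ ℂ² with Re(s + w) > 2 and Re(w) > 1, setting u = q^{−(s+w)} and v = q^{−w}, one has Q(u,v)·Σ_{0 ≤ n ≤ m} b_n b_m q^{−ns} q^{−mw} = P_1(u,v) + P_2(u,v) + P_3(u,v), where Q(u,v) = (1−u)(1−qu)(1−q²u)(1−v)(1−qv)·∏_{n=0}^{2g−2} v^n, P_1(u,v) = Q(u,v)·Σ_{n=0}^{2g−2} Σ_{m=0}^{2g−2−n} b_n b_{m+n} u^n v^m, P_2(u,v) = (h/(q−1))·(1−u)(1−qu)(1−q²u)·[q^g(1−v) − (1−qv)]·v^{2g−1}·Σ_{k=0}^{2g−2} b_k u^k ∏_{n=0, n≠k}^{2g−2} v^n, and P_3(u,v) = (h²/(q−1)²)·∏_{n=0}^{2g−2} v^n · [ (1−qu)(1−v)(1−u)q^{2g} − (1−q²u)(1−v)(1−u)q^g − (1−qv)(1−q²u)(1−u)q^g + (1−qv)(1−q²u)(1−qu) ]·u^{2g−1}.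 -/

import Mathlib

set_option maxHeartbeats 8000000


/-- Let `q ≥ 2`, `g ≥ 1`, `h ≥ 1` and `(b_n)` naturals with
`b_n = h(q^{n−g+1} − 1)/(q − 1)` for `n > 2g − 2`. For `Re(s+w) > 2`,
`Re(w) > 1`, setting `u = q^{−(s+w)}`, `v = q^{−w}`, one has
`Q(u,v)·Z_2 = P_1(u,v) + P_2(u,v) + P_3(u,v)` with the explicit polynomials
`Q, P_1, P_2, P_3` of the paper. -/

private lemma dz_alg2 (D y c A P W X H yn z : ℂ) (hy : 1 - y ≠ 0) (hcy : 1 - c * y ≠ 0)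
    (hyn : yn ≠ 0) (hz : yn * z = W) :
    (D * (1 - y) * (1 - c * y) * (yn * P)) *
        ((X * z) * (H * (A * (1 - c * y)⁻¹ - (1 - y)⁻¹))) =
      H * D * (A * (1 - y) - (1 - c * y)) * W * (X * P) := by
  have hz' : z = W / yn := by
    rw [eq_div_iff hyn]
    linear_combination hz
  rw [hz', div_eq_mul_inv]
  have e1 : (1 - c * y) * (1 - c * y)⁻¹ = 1 := mul_inv_cancel₀ hcy
  have e2 : (1 - y) * (1 - y)⁻¹ = 1 := mul_inv_cancel₀ hy
  have e3 : yn * yn⁻¹ = 1 := mul_inv_cancel₀ hyn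
  linear_combination (D * P * X * W * H) * (1 - y) * (1 - c * y) * (A * (1 - c * y)⁻¹ - (1 - y)⁻¹) * e3 +
    (D * P * X * W * H) * (1 - y) * A * e1 - (D * P * X * W * H) * (1 - c * y) * e2

private lemma dz_alg3 (x y c A V U H : ℂ) (h1 : 1 - x ≠ 0) (h2 : 1 - c * x ≠ 0)
    (h3 : 1 - c ^ 2 * x ≠ 0) (h4 : 1 - y ≠ 0) (h5 : 1 - c * y ≠ 0) :
    ((1 - x) * (1 - c * x) * (1 - c ^ 2 * x) * (1 - y) * (1 - c * y) * V) *
        ((H * U) * ((A ^ 2 * (1 - c * y)⁻¹) * (1 - c ^ 2 * x)⁻¹ -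
          (A * (1 - c * y)⁻¹) * (1 - c * x)⁻¹ -
          (A * (1 - y)⁻¹) * (1 - c * x)⁻¹ +
          (1 - y)⁻¹ * (1 - x)⁻¹)) =
      H * V * ((1 - c * x) * (1 - y) * (1 - x) * A ^ 2 -
          (1 - c ^ 2 * x) * (1 - y) * (1 - x) * A -
          (1 - c * y) * (1 - c ^ 2 * x) * (1 - x) * A +
          (1 - c * y) * (1 - c ^ 2 * x) * (1 - c * x)) * U := by
  have t1 : ((1 - x) * (1 - c * x) * (1 - c ^ 2 * x) * (1 - y) * (1 - c * y)) *
      ((A ^ 2 * (1 - c * y)⁻¹) * (1 - c ^ 2 * x)⁻¹) = (1 - c * x) * (1 - y) * (1 - x) * A ^ 2 := by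
    have ea : (1 - c * y) * (1 - c * y)⁻¹ = 1 := mul_inv_cancel₀ h5
    have ed : (1 - c ^ 2 * x) * (1 - c ^ 2 * x)⁻¹ = 1 := mul_inv_cancel₀ h3
    linear_combination ((1 - x) * (1 - c * x) * (1 - y) * A ^ 2) * (1 - c ^ 2 * x) * (1 - c ^ 2 * x)⁻¹ * ea +
      ((1 - x) * (1 - c * x) * (1 - y) * A ^ 2) * ed
  have t2 : ((1 - x) * (1 - c * x) * (1 - c ^ 2 * x) * (1 - y) * (1 - c * y)) *
      ((A * (1 - c * y)⁻¹) * (1 - c * x)⁻¹) = (1 - c ^ 2 * x) * (1 - y) * (1 - x) * A := by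
    have ea : (1 - c * y) * (1 - c * y)⁻¹ = 1 := mul_inv_cancel₀ h5
    have ee : (1 - c * x) * (1 - c * x)⁻¹ = 1 := mul_inv_cancel₀ h2
    linear_combination ((1 - x) * (1 - c ^ 2 * x) * (1 - y) * A) * (1 - c * x) * (1 - c * x)⁻¹ * ea +
      ((1 - x) * (1 - c ^ 2 * x) * (1 - y) * A) * ee
  have t3 : ((1 - x) * (1 - c * x) * (1 - c ^ 2 * x) * (1 - y) * (1 - c * y)) *
      ((A * (1 - y)⁻¹) * (1 - c * x)⁻¹) = (1 - c * y) * (1 - c ^ 2 * x) * (1 - x) * A := by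
    have eb : (1 - y) * (1 - y)⁻¹ = 1 := mul_inv_cancel₀ h4
    have ee : (1 - c * x) * (1 - c * x)⁻¹ = 1 := mul_inv_cancel₀ h2
    linear_combination ((1 - x) * (1 - c ^ 2 * x) * (1 - c * y) * A) * (1 - c * x) * (1 - c * x)⁻¹ * eb +
      ((1 - x) * (1 - c ^ 2 * x) * (1 - c * y) * A) * ee
  have t4 : ((1 - x) * (1 - c * x) * (1 - c ^ 2 * x) * (1 - y) * (1 - c * y)) *
      ((1 - y)⁻¹ * (1 - x)⁻¹) = (1 - c * y) * (1 - c ^ 2 * x) * (1 - c * x) := by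
    field_simp
  linear_combination H * V * U * (t1 - t2 - t3 + t4)

theorem double_zeta_genus_ge_one_decomposition
    (q g h : ℕ) (hq : 2 ≤ q) (hg : 1 ≤ g) (hh : 1 ≤ h)
    (b : ℕ → ℕ)
    (hb : ∀ n : ℕ, 2 * g - 2 < n → b n * (q - 1) = h * (q ^ (n - g + 1) - 1))
    (s w : ℂ) (h1 : 2 < (s + w).re) (h2 : 1 < w.re)
    (u v : ℂ) (hu : u = (q : ℂ) ^ (-(s + w))) (hv : v = (q : ℂ) ^ (-w)) :
    ((1 - u) * (1 - (q : ℂ) * u) * (1 - (q : ℂ) ^ 2 * u) * (1 - v) * (1 - (q : ℂ) * v) *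
        ∏ n ∈ Finset.range (2 * g - 1), v ^ n) *
      (∑' p : {p : ℕ × ℕ // p.1 ≤ p.2},
        (b p.1.1 : ℂ) * (b p.1.2 : ℂ) *
          (q : ℂ) ^ (-(p.1.1 : ℂ) * s) * (q : ℂ) ^ (-(p.1.2 : ℂ) * w)) =
    -- P₁(u,v)
    ((1 - u) * (1 - (q : ℂ) * u) * (1 - (q : ℂ) ^ 2 * u) * (1 - v) * (1 - (q : ℂ) * v) *
        ∏ n ∈ Finset.range (2 * g - 1), v ^ n) *
      (∑ n ∈ Finset.range (2 * g - 1), ∑ m ∈ Finset.range (2 * g - 1 - n),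
        (b n : ℂ) * (b (m + n) : ℂ) * u ^ n * v ^ m) +
    -- P₂(u,v)
    (h : ℂ) / ((q : ℂ) - 1) *
      ((1 - u) * (1 - (q : ℂ) * u) * (1 - (q : ℂ) ^ 2 * u)) *
      ((q : ℂ) ^ g * (1 - v) - (1 - (q : ℂ) * v)) * v ^ (2 * g - 1) *
      (∑ k ∈ Finset.range (2 * g - 1),
        (b k : ℂ) * u ^ k * ∏ n ∈ (Finset.range (2 * g - 1)).erase k, v ^ n) +
    -- P₃(u,v)
    (h : ℂ) ^ 2 / ((q : ℂ) - 1) ^ 2 * (∏ n ∈ Finset.range (2 * g - 1), v ^ n) *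
      ((1 - (q : ℂ) * u) * (1 - v) * (1 - u) * (q : ℂ) ^ (2 * g) -
        (1 - (q : ℂ) ^ 2 * u) * (1 - v) * (1 - u) * (q : ℂ) ^ g -
        (1 - (q : ℂ) * v) * (1 - (q : ℂ) ^ 2 * u) * (1 - u) * (q : ℂ) ^ g +
        (1 - (q : ℂ) * v) * (1 - (q : ℂ) ^ 2 * u) * (1 - (q : ℂ) * u)) *
      u ^ (2 * g - 1) := by
  -- basic positivity facts
  have hq0 : 0 < q := by omega
  have hqR1 : (1 : ℝ) < (q : ℝ) := by exact_mod_cast (by omega : 1 < q)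
  have hqRpos : (0 : ℝ) < (q : ℝ) := by positivity
  have qne : (q : ℂ) ≠ 0 := Nat.cast_ne_zero.mpr (by omega)
  have hq1ne : (q : ℂ) - 1 ≠ 0 :=
    sub_ne_zero_of_ne (by exact_mod_cast (by omega : q ≠ 1))
  have hvn0 : v ≠ 0 := by
    rw [hv]
    intro h0
    rw [Complex.cpow_eq_zero_iff] at h0
    exact qne h0.1
  -- norms of u, v
  have hnu : ‖u‖ = (q : ℝ) ^ (-(s + w).re) := by
    rw [hu, Complex.norm_natCast_cpow_of_pos hq0, Complex.neg_re]
  have hnv : ‖v‖ = (q : ℝ) ^ (-(w.re)) := by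
    rw [hv, Complex.norm_natCast_cpow_of_pos hq0, Complex.neg_re]
  have key : ∀ (a : ℕ) (z : ℂ) (r : ℝ), ‖z‖ = (q : ℝ) ^ (-r) → (a : ℝ) < r →
      ‖(q : ℂ) ^ a * z‖ < 1 := by
    intro a z r hz har
    rw [norm_mul, norm_pow, Complex.norm_natCast, hz, ← Real.rpow_natCast,
      ← Real.rpow_add hqRpos]
    calc (q : ℝ) ^ ((a : ℝ) + -r) < (q : ℝ) ^ (0 : ℝ) :=
          Real.rpow_lt_rpow_of_exponent_lt hqR1 (by linarith)
      _ = 1 := Real.rpow_zero _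
  have hu1 : ‖u‖ < 1 := by
    have := key 0 u _ hnu (by push_cast; linarith)
    simpa using this
  have hqu1 : ‖(q : ℂ) * u‖ < 1 := by
    have := key 1 u _ hnu (by push_cast; linarith)
    simpa using this
  have hq2u1 : ‖(q : ℂ) ^ 2 * u‖ < 1 := key 2 u _ hnu (by push_cast; linarith)
  have hv1 : ‖v‖ < 1 := by
    have := key 0 v _ hnv (by push_cast; linarith)
    simpa using this
  have hqv1 : ‖(q : ℂ) * v‖ < 1 := by
    have := key 1 v _ hnv (by push_cast; linarith)
    simpa using this
  -- nonvanishing of the denominators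
  have hne1 : ∀ z : ℂ, ‖z‖ < 1 → 1 - z ≠ 0 := by
    intro z hz hcontra
    rw [sub_eq_zero] at hcontra
    rw [← hcontra] at hz
    simp at hz
  have h1u := hne1 u hu1
  have h1qu := hne1 _ hqu1
  have h1q2u := hne1 _ hq2u1
  have h1v := hne1 v hv1
  have h1qv := hne1 _ hqv1
  -- geometric series
  have Gu := hasSum_geometric_of_norm_lt_one hu1
  have Gqu := hasSum_geometric_of_norm_lt_one hqu1
  have Gq2u := hasSum_geometric_of_norm_lt_one hq2u1
  have Gv := hasSum_geometric_of_norm_lt_one hv1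
  have Gqv := hasSum_geometric_of_norm_lt_one hqv1
  -- the complex-valued formula for b in the stable range
  have hbd : ∀ j : ℕ, (b (2 * g - 1 + j) : ℂ) = (h : ℂ) * ((q : ℂ) ^ (g + j) - 1) / ((q : ℂ) - 1) := by
    intro j
    have h1' := hb (2 * g - 1 + j) (by omega)
    have he : 2 * g - 1 + j - g + 1 = g + j := by omega
    rw [he] at h1'
    have e1 : ((q - 1 : ℕ) : ℂ) = (q : ℂ) - 1 := by
      rw [Nat.cast_sub (by omega : 1 ≤ q)]; norm_num
    have e2 : ((q ^ (g + j) - 1 : ℕ) : ℂ) = (q : ℂ) ^ (g + j) - 1 := by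
      rw [Nat.cast_sub (Nat.one_le_pow _ _ hq0)]; push_cast; ring
    rw [eq_div_iff hq1ne]
    calc (b (2 * g - 1 + j) : ℂ) * ((q : ℂ) - 1)
        = ((b (2 * g - 1 + j) * (q - 1) : ℕ) : ℂ) := by rw [Nat.cast_mul, e1]
      _ = ((h * (q ^ (g + j) - 1) : ℕ) : ℂ) := by rw [h1']
      _ = (h : ℂ) * ((q : ℂ) ^ (g + j) - 1) := by rw [Nat.cast_mul, e2]
  -- the summand over pairs (n, k) with m = n + k
  set F : ℕ × ℕ → ℂ := fun p => (b p.1 : ℂ) * (b (p.1 + p.2) : ℂ) * u ^ p.1 * v ^ p.2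
    with hFdef
  -- a geometric bound on b
  have hCb : ∀ m : ℕ, b m ≤ (h * q + ∑ i ∈ Finset.range (2 * g - 1), b i) * q ^ m := by
    intro m
    by_cases hm : m < 2 * g - 1
    · have h1' : b m ≤ ∑ i ∈ Finset.range (2 * g - 1), b i :=
        Finset.single_le_sum (fun i _ => Nat.zero_le _) (Finset.mem_range.mpr hm)
      have h2' : 1 ≤ q ^ m := Nat.one_le_pow _ _ hq0
      calc b m ≤ (h * q + ∑ i ∈ Finset.range (2 * g - 1), b i) := by omega
        _ = (h * q + ∑ i ∈ Finset.range (2 * g - 1), b i) * 1 := (mul_one _).symm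
        _ ≤ (h * q + ∑ i ∈ Finset.range (2 * g - 1), b i) * q ^ m :=
            Nat.mul_le_mul (le_refl _) h2'
    · have h1' := hb m (by omega)
      have h2' : q ^ (m - g + 1) - 1 ≤ q ^ (m + 1) :=
        le_trans (Nat.sub_le _ _) (Nat.pow_le_pow_right (by omega) (by omega))
      calc b m = b m * 1 := (mul_one _).symm
        _ ≤ b m * (q - 1) := Nat.mul_le_mul (le_refl _) (by omega)
        _ = h * (q ^ (m - g + 1) - 1) := h1'
        _ ≤ h * q ^ (m + 1) := Nat.mul_le_mul (le_refl _) h2'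
        _ = (h * q) * q ^ m := by ring
        _ ≤ (h * q + ∑ i ∈ Finset.range (2 * g - 1), b i) * q ^ m :=
            Nat.mul_le_mul (Nat.le_add_right _ _) (le_refl _)
  -- summability of F
  have hsum1 : Summable (fun n : ℕ =>
      ((h * q + ∑ i ∈ Finset.range (2 * g - 1), b i : ℕ) : ℝ) ^ 2 * ‖(q : ℂ) ^ 2 * u‖ ^ n) :=
    (summable_geometric_of_norm_lt_one
      (by rwa [Real.norm_of_nonneg (norm_nonneg _)])).mul_left _
  have hsum2 : Summable (fun k : ℕ => ‖(q : ℂ) * v‖ ^ k) :=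
    summable_geometric_of_norm_lt_one (by rwa [Real.norm_of_nonneg (norm_nonneg _)])
  have hFnorm : Summable (fun p : ℕ × ℕ => ‖F p‖) := by
    refine Summable.of_nonneg_of_le (fun _ => norm_nonneg _) ?_
      (hsum1.mul_of_nonneg hsum2 (fun n => by positivity) (fun k => by positivity))
    rintro ⟨n, k⟩
    have hb1 : ((b n : ℝ)) ≤ ((h * q + ∑ i ∈ Finset.range (2 * g - 1), b i : ℕ) : ℝ) * (q : ℝ) ^ n := by
      exact_mod_cast hCb n
    have hb2 : ((b (n + k) : ℝ)) ≤
        ((h * q + ∑ i ∈ Finset.range (2 * g - 1), b i : ℕ) : ℝ) * (q : ℝ) ^ (n + k) := by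
      exact_mod_cast hCb (n + k)
    have hnorm : ‖F (n, k)‖ = (b n : ℝ) * (b (n + k) : ℝ) * ‖u‖ ^ n * ‖v‖ ^ k := by
      simp [hFdef, norm_mul, norm_pow, RCLike.norm_natCast]
    calc ‖F (n, k)‖ = (b n : ℝ) * (b (n + k) : ℝ) * ‖u‖ ^ n * ‖v‖ ^ k := hnorm
      _ ≤ (((h * q + ∑ i ∈ Finset.range (2 * g - 1), b i : ℕ) : ℝ) * (q : ℝ) ^ n) *
            (((h * q + ∑ i ∈ Finset.range (2 * g - 1), b i : ℕ) : ℝ) * (q : ℝ) ^ (n + k)) *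
            ‖u‖ ^ n * ‖v‖ ^ k := by gcongr
      _ = ((h * q + ∑ i ∈ Finset.range (2 * g - 1), b i : ℕ) : ℝ) ^ 2 *
            ‖(q : ℂ) ^ 2 * u‖ ^ n * ‖(q : ℂ) * v‖ ^ k := by
          rw [norm_mul, norm_mul, norm_pow, RCLike.norm_natCast]
          ring
  have hFsummable : Summable F := hFnorm.of_norm
  have hfib : ∀ n : ℕ, Summable fun k => F (n, k) := fun n => hFsummable.prod_factor n
  -- inner geometric tails
  have inner_tail : ∀ a : ℕ, HasSum (fun k : ℕ => (b (2 * g - 1 + (a + k)) : ℂ) * v ^ k)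
      ((h : ℂ) / ((q : ℂ) - 1) * ((q : ℂ) ^ (g + a) * (1 - (q : ℂ) * v)⁻¹ - (1 - v)⁻¹)) := by
    intro a
    have h1' := ((Gqv.mul_left ((q : ℂ) ^ (g + a))).sub Gv).mul_left ((h : ℂ) / ((q : ℂ) - 1))
    have hfun : (fun k : ℕ => (b (2 * g - 1 + (a + k)) : ℂ) * v ^ k) =
        fun k : ℕ => (h : ℂ) / ((q : ℂ) - 1) * ((q : ℂ) ^ (g + a) * ((q : ℂ) * v) ^ k - v ^ k) := by
      funext k
      rw [hbd (a + k), mul_pow, show g + (a + k) = (g + a) + k by omega, pow_add]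
      ring
    rw [hfun]
    exact h1'
  -- value of the fibers below 2g-1
  have hfiblt : ∀ n : ℕ, n < 2 * g - 1 → (∑' k : ℕ, F (n, k)) =
      ((b n : ℂ) * u ^ n * v ^ (2 * g - 1 - n)) *
        ((h : ℂ) / ((q : ℂ) - 1) * ((q : ℂ) ^ g * (1 - (q : ℂ) * v)⁻¹ - (1 - v)⁻¹)) +
      ∑ i ∈ Finset.range (2 * g - 1 - n), F (n, i) := by
    intro n hn
    have ht := (inner_tail 0).mul_left ((b n : ℂ) * u ^ n * v ^ (2 * g - 1 - n))
    have hfun : (fun k : ℕ => ((b n : ℂ) * u ^ n * v ^ (2 * g - 1 - n)) *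
        ((b (2 * g - 1 + (0 + k)) : ℂ) * v ^ k)) =
        fun k : ℕ => F (n, k + (2 * g - 1 - n)) := by
      funext k
      simp only [hFdef]
      rw [show n + (k + (2 * g - 1 - n)) = 2 * g - 1 + (0 + k) by omega, pow_add]
      ring
    rw [hfun] at ht
    have := (hasSum_nat_add_iff (f := fun m => F (n, m)) (2 * g - 1 - n)).1 ht
    exact this.tsum_eq
  -- value of the fibers at and above 2g-1
  have hfibge : ∀ j : ℕ, (∑' k : ℕ, F (j + (2 * g - 1), k)) =
      (b (2 * g - 1 + j) : ℂ) * u ^ (2 * g - 1 + j) *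
        ((h : ℂ) / ((q : ℂ) - 1) * ((q : ℂ) ^ (g + j) * (1 - (q : ℂ) * v)⁻¹ - (1 - v)⁻¹)) := by
    intro j
    have ht := (inner_tail j).mul_left ((b (2 * g - 1 + j) : ℂ) * u ^ (2 * g - 1 + j))
    have hfun : (fun k : ℕ => ((b (2 * g - 1 + j) : ℂ) * u ^ (2 * g - 1 + j)) *
        ((b (2 * g - 1 + (j + k)) : ℂ) * v ^ k)) =
        fun k : ℕ => F (j + (2 * g - 1), k) := by
      funext k
      simp only [hFdef]
      rw [show j + (2 * g - 1) = 2 * g - 1 + j by omega,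
        show 2 * g - 1 + j + k = 2 * g - 1 + (j + k) by omega]
      ring
    rw [hfun] at ht
    exact ht.tsum_eq
  -- the outer sum
  have hOuter : HasSum (fun n : ℕ => ∑' k : ℕ, F (n, k)) (∑' p : ℕ × ℕ, F p) :=
    hFsummable.hasSum.prod_fiberwise (fun n => (hfib n).hasSum)
  -- sum of the tail fibers
  have hW : HasSum (fun j : ℕ => (b (2 * g - 1 + j) : ℂ) * u ^ (2 * g - 1 + j) *
      ((h : ℂ) / ((q : ℂ) - 1) * ((q : ℂ) ^ (g + j) * (1 - (q : ℂ) * v)⁻¹ - (1 - v)⁻¹)))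
      (((h : ℂ) ^ 2 / ((q : ℂ) - 1) ^ 2 * u ^ (2 * g - 1)) *
        (((q : ℂ) ^ (2 * g) * (1 - (q : ℂ) * v)⁻¹) * (1 - (q : ℂ) ^ 2 * u)⁻¹ -
          ((q : ℂ) ^ g * (1 - (q : ℂ) * v)⁻¹) * (1 - (q : ℂ) * u)⁻¹ -
          ((q : ℂ) ^ g * (1 - v)⁻¹) * (1 - (q : ℂ) * u)⁻¹ +
          (1 - v)⁻¹ * (1 - u)⁻¹)) := by
    have base := ((((Gq2u.mul_left ((q : ℂ) ^ (2 * g) * (1 - (q : ℂ) * v)⁻¹)).sub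
        (Gqu.mul_left ((q : ℂ) ^ g * (1 - (q : ℂ) * v)⁻¹))).sub
        (Gqu.mul_left ((q : ℂ) ^ g * (1 - v)⁻¹))).add
        (Gu.mul_left ((1 - v)⁻¹))).mul_left ((h : ℂ) ^ 2 / ((q : ℂ) - 1) ^ 2 * u ^ (2 * g - 1))
    have hfe : (fun j : ℕ => (b (2 * g - 1 + j) : ℂ) * u ^ (2 * g - 1 + j) *
        ((h : ℂ) / ((q : ℂ) - 1) * ((q : ℂ) ^ (g + j) * (1 - (q : ℂ) * v)⁻¹ - (1 - v)⁻¹))) =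
        fun j : ℕ => ((h : ℂ) ^ 2 / ((q : ℂ) - 1) ^ 2 * u ^ (2 * g - 1)) *
          (((q : ℂ) ^ (2 * g) * (1 - (q : ℂ) * v)⁻¹) * ((q : ℂ) ^ 2 * u) ^ j -
            ((q : ℂ) ^ g * (1 - (q : ℂ) * v)⁻¹) * ((q : ℂ) * u) ^ j -
            ((q : ℂ) ^ g * (1 - v)⁻¹) * ((q : ℂ) * u) ^ j +
            (1 - v)⁻¹ * u ^ j) := by
      funext j
      rw [hbd j, show (h : ℂ) ^ 2 / ((q : ℂ) - 1) ^ 2 = ((h : ℂ) / ((q : ℂ) - 1)) ^ 2 from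
        (div_pow _ _ 2).symm]
      simp only [pow_add, mul_pow]
      ring
    rw [hfe]
    exact base
  -- assemble the value of the whole double sum
  have hAval : (∑' p : ℕ × ℕ, F p) =
      (∑ n ∈ Finset.range (2 * g - 1),
        (((b n : ℂ) * u ^ n * v ^ (2 * g - 1 - n)) *
          ((h : ℂ) / ((q : ℂ) - 1) * ((q : ℂ) ^ g * (1 - (q : ℂ) * v)⁻¹ - (1 - v)⁻¹)))) +
      (∑ n ∈ Finset.range (2 * g - 1), ∑ i ∈ Finset.range (2 * g - 1 - n), F (n, i)) +
      (((h : ℂ) ^ 2 / ((q : ℂ) - 1) ^ 2 * u ^ (2 * g - 1)) *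
        (((q : ℂ) ^ (2 * g) * (1 - (q : ℂ) * v)⁻¹) * (1 - (q : ℂ) ^ 2 * u)⁻¹ -
          ((q : ℂ) ^ g * (1 - (q : ℂ) * v)⁻¹) * (1 - (q : ℂ) * u)⁻¹ -
          ((q : ℂ) ^ g * (1 - v)⁻¹) * (1 - (q : ℂ) * u)⁻¹ +
          (1 - v)⁻¹ * (1 - u)⁻¹)) := by
    have hsplit := (Summable.sum_add_tsum_nat_add (f := fun n : ℕ => ∑' k : ℕ, F (n, k)) (2 * g - 1)
      hOuter.summable).symm
    rw [← hOuter.tsum_eq, hsplit]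
    have hfin : ∑ n ∈ Finset.range (2 * g - 1), (∑' k : ℕ, F (n, k)) =
        (∑ n ∈ Finset.range (2 * g - 1),
          (((b n : ℂ) * u ^ n * v ^ (2 * g - 1 - n)) *
            ((h : ℂ) / ((q : ℂ) - 1) * ((q : ℂ) ^ g * (1 - (q : ℂ) * v)⁻¹ - (1 - v)⁻¹)))) +
        (∑ n ∈ Finset.range (2 * g - 1), ∑ i ∈ Finset.range (2 * g - 1 - n), F (n, i)) := by
      rw [Finset.sum_congr rfl (fun n hn => hfiblt n (Finset.mem_range.mp hn))]
      exact Finset.sum_add_distrib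
    have htail : (∑' j : ℕ, ∑' k : ℕ, F (j + (2 * g - 1), k)) =
        (((h : ℂ) ^ 2 / ((q : ℂ) - 1) ^ 2 * u ^ (2 * g - 1)) *
          (((q : ℂ) ^ (2 * g) * (1 - (q : ℂ) * v)⁻¹) * (1 - (q : ℂ) ^ 2 * u)⁻¹ -
            ((q : ℂ) ^ g * (1 - (q : ℂ) * v)⁻¹) * (1 - (q : ℂ) * u)⁻¹ -
            ((q : ℂ) ^ g * (1 - v)⁻¹) * (1 - (q : ℂ) * u)⁻¹ +
            (1 - v)⁻¹ * (1 - u)⁻¹)) := by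
      rw [tsum_congr hfibge]
      exact hW.tsum_eq
    rw [hfin, htail]
  -- rewrite the subtype tsum as the tsum of F over ℕ × ℕ
  have hequiv : (∑' p : {p : ℕ × ℕ // p.1 ≤ p.2},
      (b p.1.1 : ℂ) * (b p.1.2 : ℂ) *
        (q : ℂ) ^ (-(p.1.1 : ℂ) * s) * (q : ℂ) ^ (-(p.1.2 : ℂ) * w)) = ∑' p : ℕ × ℕ, F p := by
    have hpw : ∀ n k : ℕ, (q : ℂ) ^ (-(n : ℂ) * s) * (q : ℂ) ^ (-((n + k : ℕ) : ℂ) * w) =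
        u ^ n * v ^ k := by
      intro n k
      rw [hu, hv, ← Complex.cpow_nat_mul, ← Complex.cpow_nat_mul,
        ← Complex.cpow_add _ _ qne, ← Complex.cpow_add _ _ qne]
      congr 1
      push_cast
      ring
    rw [← Equiv.tsum_eq (Equiv.mk
      (fun p : ℕ × ℕ => (⟨(p.1, p.1 + p.2), Nat.le_add_right _ _⟩ : {p : ℕ × ℕ // p.1 ≤ p.2}))
      (fun p => (p.1.1, p.1.2 - p.1.1))
      (fun p => by obtain ⟨n, k⟩ := p; simp)
      (fun p => by
        obtain ⟨⟨n, m⟩, hnm⟩ := p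
        exact Subtype.ext (by simp [Nat.add_sub_cancel' hnm])))]
    refine tsum_congr fun p => ?_
    obtain ⟨n, k⟩ := p
    simp only [hFdef, Equiv.coe_fn_mk]
    simp only [mul_assoc]
    rw [hpw n k]
  rw [hequiv, hAval]
  -- the three polynomial identities
  have eq1 : ((1 - u) * (1 - (q : ℂ) * u) * (1 - (q : ℂ) ^ 2 * u) * (1 - v) * (1 - (q : ℂ) * v) *
        ∏ n ∈ Finset.range (2 * g - 1), v ^ n) *
      (∑ n ∈ Finset.range (2 * g - 1), ∑ i ∈ Finset.range (2 * g - 1 - n), F (n, i)) =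
      ((1 - u) * (1 - (q : ℂ) * u) * (1 - (q : ℂ) ^ 2 * u) * (1 - v) * (1 - (q : ℂ) * v) *
        ∏ n ∈ Finset.range (2 * g - 1), v ^ n) *
      (∑ n ∈ Finset.range (2 * g - 1), ∑ m ∈ Finset.range (2 * g - 1 - n),
        (b n : ℂ) * (b (m + n) : ℂ) * u ^ n * v ^ m) := by
    congr 1
    refine Finset.sum_congr rfl fun n _ => Finset.sum_congr rfl fun m _ => ?_
    simp only [hFdef]
    rw [Nat.add_comm n m]
  have eq2 : ((1 - u) * (1 - (q : ℂ) * u) * (1 - (q : ℂ) ^ 2 * u) * (1 - v) * (1 - (q : ℂ) * v) *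
        ∏ n ∈ Finset.range (2 * g - 1), v ^ n) *
      (∑ n ∈ Finset.range (2 * g - 1),
        (((b n : ℂ) * u ^ n * v ^ (2 * g - 1 - n)) *
          ((h : ℂ) / ((q : ℂ) - 1) * ((q : ℂ) ^ g * (1 - (q : ℂ) * v)⁻¹ - (1 - v)⁻¹)))) =
      (h : ℂ) / ((q : ℂ) - 1) *
        ((1 - u) * (1 - (q : ℂ) * u) * (1 - (q : ℂ) ^ 2 * u)) *
        ((q : ℂ) ^ g * (1 - v) - (1 - (q : ℂ) * v)) * v ^ (2 * g - 1) *
        (∑ k ∈ Finset.range (2 * g - 1),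
          (b k : ℂ) * u ^ k * ∏ n ∈ (Finset.range (2 * g - 1)).erase k, v ^ n) := by
    rw [Finset.mul_sum, Finset.mul_sum]
    refine Finset.sum_congr rfl fun n hn => ?_
    have hn' := Finset.mem_range.mp hn
    have hV : (∏ i ∈ Finset.range (2 * g - 1), v ^ i) =
        v ^ n * ∏ i ∈ (Finset.range (2 * g - 1)).erase n, v ^ i :=
      (Finset.mul_prod_erase _ _ hn).symm
    have hpz : v ^ n * v ^ (2 * g - 1 - n) = v ^ (2 * g - 1) := by
      rw [← pow_add]
      congr 1
      omega
    rw [hV]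
    linear_combination dz_alg2 ((1 - u) * (1 - (q : ℂ) * u) * (1 - (q : ℂ) ^ 2 * u)) v (q : ℂ)
      ((q : ℂ) ^ g) (∏ i ∈ (Finset.range (2 * g - 1)).erase n, v ^ i) (v ^ (2 * g - 1))
      ((b n : ℂ) * u ^ n) ((h : ℂ) / ((q : ℂ) - 1)) (v ^ n) (v ^ (2 * g - 1 - n))
      h1v h1qv (pow_ne_zero n hvn0) hpz
  have eq3 : ((1 - u) * (1 - (q : ℂ) * u) * (1 - (q : ℂ) ^ 2 * u) * (1 - v) * (1 - (q : ℂ) * v) *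
        ∏ n ∈ Finset.range (2 * g - 1), v ^ n) *
      (((h : ℂ) ^ 2 / ((q : ℂ) - 1) ^ 2 * u ^ (2 * g - 1)) *
        (((q : ℂ) ^ (2 * g) * (1 - (q : ℂ) * v)⁻¹) * (1 - (q : ℂ) ^ 2 * u)⁻¹ -
          ((q : ℂ) ^ g * (1 - (q : ℂ) * v)⁻¹) * (1 - (q : ℂ) * u)⁻¹ -
          ((q : ℂ) ^ g * (1 - v)⁻¹) * (1 - (q : ℂ) * u)⁻¹ +
          (1 - v)⁻¹ * (1 - u)⁻¹)) =
      (h : ℂ) ^ 2 / ((q : ℂ) - 1) ^ 2 * (∏ n ∈ Finset.range (2 * g - 1), v ^ n) *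
        ((1 - (q : ℂ) * u) * (1 - v) * (1 - u) * (q : ℂ) ^ (2 * g) -
          (1 - (q : ℂ) ^ 2 * u) * (1 - v) * (1 - u) * (q : ℂ) ^ g -
          (1 - (q : ℂ) * v) * (1 - (q : ℂ) ^ 2 * u) * (1 - u) * (q : ℂ) ^ g +
          (1 - (q : ℂ) * v) * (1 - (q : ℂ) ^ 2 * u) * (1 - (q : ℂ) * u)) *
        u ^ (2 * g - 1) := by
    have h2g : (q : ℂ) ^ (2 * g) = ((q : ℂ) ^ g) ^ 2 := by
      rw [← pow_mul, Nat.mul_comm]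
    rw [h2g]
    linear_combination dz_alg3 u v (q : ℂ) ((q : ℂ) ^ g)
      (∏ n ∈ Finset.range (2 * g - 1), v ^ n) (u ^ (2 * g - 1))
      ((h : ℂ) ^ 2 / ((q : ℂ) - 1) ^ 2) h1u h1qu h1q2u h1v h1qv
  rw [mul_add, mul_add, eq1, eq2, eq3]
  abel
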